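/- arXiv:1411.4573 — 2 statements merged into one kernel-verified Lean document; each statement's English description precedes it below -/
import Mathlib

section
/- Let G = (V,E) be a complete undirected graph on n nodes with root r ∈ V and metric edge costs {c_e}. Let B be an integer with 1 ≤ B ≤ n, and let O* be the minimum total cost of a finite collection of r-rooted paths whose union spans at least B nodes. Then there exist rooted trees T_1, T_2 (subtrees of G containing r) and reals a, b ≥ 0 with a + b = 1 such that a·c(T_1) + b·c(T_2) ≤ O* and a·|V(T_1)| + b·|V(T_2)| = B (the case T_1 = T_2 corresponds to a single rooted tree Q with c(Q) ≤ O* and |V(Q)| = B). -/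
open Finset

/-- `c` is a (semi-)metric cost function. -/
def IsMetricCost {V : Type*} (c : V → V → ℝ) : Prop :=
  (∀ u, c u u = 0) ∧ (∀ u v, 0 ≤ c u v) ∧ (∀ u v, c u v = c v u) ∧
    ∀ u v x, c u x ≤ c u v + c v x

/-- Cost of a walk (a list of vertices). -/
def walkCost {V : Type*} (c : V → V → ℝ) : List V → ℝ
  | [] => 0
  | [_] => 0
  | a :: b :: l => c a b + walkCost c (b :: l)

/-- A rooted tree: a tree in the complete graph on `V` containing the root `r`. -/
structure RTree (V : Type*) (r : V) where
  verts : Finset V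
  root_mem : r ∈ verts
  parent : V → V
  parent_mem : ∀ v ∈ verts, parent v ∈ verts
  reaches : ∀ v ∈ verts, ∃ m : ℕ, parent^[m] v = r

/-- Total edge cost of a rooted tree. -/
noncomputable def treeCost {V : Type*} [DecidableEq V] {r : V}
    (c : V → V → ℝ) (T : RTree V r) : ℝ :=
  ∑ v ∈ T.verts.erase r, c (T.parent v) v

/-- The union of the vertex sets of a collection of walks. -/
def unionVerts {V : Type*} [DecidableEq V] (𝒞 : List (List V)) : Finset V :=
  𝒞.foldr (fun P s => P.toFinset ∪ s) ∅

section Aux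

variable {V : Type*} [DecidableEq V] {r : V}

/-- The trivial rooted tree on just the root. -/
def trivTree (V : Type*) [DecidableEq V] (r : V) : RTree V r where
  verts := {r}
  root_mem := Finset.mem_singleton_self r
  parent := id
  parent_mem := fun v hv => hv
  reaches := fun v hv => ⟨0, by simpa using Finset.mem_singleton.mp hv⟩

theorem iterate_update_eq (T : RTree V r) {v : V} (hv : v ∉ T.verts) (u : V) :
    ∀ (m : ℕ) (w : V), w ∈ T.verts →
      (Function.update T.parent v u)^[m] w = T.parent^[m] w := by
  intro m
  induction m with
  | zero => simp
  | succ m ih =>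
    intro w hw
    rw [Function.iterate_succ_apply, Function.iterate_succ_apply,
      Function.update_of_ne (by rintro rfl; exact hv hw)]
    exact ih _ (T.parent_mem w hw)

/-- Add edge `u → v` to a rooted tree (if `u` is present and `v` is new). -/
def addEdge (T : RTree V r) (u v : V) : RTree V r :=
  if h : u ∈ T.verts ∧ v ∉ T.verts then
    { verts := insert v T.verts
      root_mem := Finset.mem_insert_of_mem T.root_mem
      parent := Function.update T.parent v u
      parent_mem := by
        intro w hw
        rcases Finset.mem_insert.mp hw with rfl | hw
        · rw [Function.update_self]; exact Finset.mem_insert_of_mem h.1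
        · have hne : w ≠ v := fun e => h.2 (e ▸ hw)
          rw [Function.update_of_ne hne]
          exact Finset.mem_insert_of_mem (T.parent_mem w hw)
      reaches := by
        intro w hw
        rcases Finset.mem_insert.mp hw with rfl | hw
        · obtain ⟨m, hm⟩ := T.reaches u h.1
          exact ⟨m + 1, by
            rw [Function.iterate_succ_apply, Function.update_self,
              iterate_update_eq T h.2 u m u h.1, hm]⟩
        · obtain ⟨m, hm⟩ := T.reaches w hw
          exact ⟨m, by rw [iterate_update_eq T h.2 u m w hw, hm]⟩ }
  else T

theorem addEdge_subset (T : RTree V r) (u v : V) : T.verts ⊆ (addEdge T u v).verts := by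
  unfold addEdge; split
  · exact Finset.subset_insert _ _
  · exact Finset.Subset.refl _

theorem mem_addEdge (T : RTree V r) {u : V} (v : V) (hu : u ∈ T.verts) :
    v ∈ (addEdge T u v).verts := by
  by_cases h : u ∈ T.verts ∧ v ∉ T.verts
  · rw [addEdge, dif_pos h]; exact Finset.mem_insert_self _ _
  · rw [addEdge, dif_neg h]
    by_contra hv
    exact h ⟨hu, hv⟩

theorem addEdge_cost (c : V → V → ℝ) (hnn : ∀ a b, 0 ≤ c a b) (T : RTree V r) (u v : V) :
    treeCost c (addEdge T u v) ≤ treeCost c T + c u v := by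
  by_cases h : u ∈ T.verts ∧ v ∉ T.verts
  · rw [addEdge, dif_pos h]
    have hvr : v ≠ r := fun hvr => h.2 (hvr ▸ T.root_mem)
    have hve : v ∉ T.verts.erase r := fun hv => h.2 (Finset.mem_of_mem_erase hv)
    show (∑ w ∈ (insert v T.verts).erase r, c (Function.update T.parent v u w) w) ≤ _
    rw [Finset.erase_insert_of_ne hvr, Finset.sum_insert hve, Function.update_self]
    have : ∀ w ∈ T.verts.erase r, c (Function.update T.parent v u w) w = c (T.parent w) w := by
      intro w hw
      rw [Function.update_of_ne (by rintro rfl; exact hve hw)]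
    rw [Finset.sum_congr rfl this]
    unfold treeCost
    ring_nf
    exact le_refl _
  · rw [addEdge, dif_neg h]
    exact le_add_of_nonneg_right (hnn u v)

/-- Grow a tree along a walk. -/
def grow (T : RTree V r) : List V → RTree V r
  | [] => T
  | [_] => T
  | a :: b :: l => grow (addEdge T a b) (b :: l)

theorem grow_subset : ∀ (P : List V) (T : RTree V r), T.verts ⊆ (grow T P).verts
  | [], _ => Finset.Subset.refl _
  | [_], _ => Finset.Subset.refl _
  | a :: b :: l, T =>
    (addEdge_subset T a b).trans (grow_subset (b :: l) (addEdge T a b))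

theorem grow_mem : ∀ (P : List V) (T : RTree V r),
    (∀ h, P.head? = some h → h ∈ T.verts) → ∀ x ∈ P, x ∈ (grow T P).verts
  | [], _, _, x, hx => absurd hx List.not_mem_nil
  | [a], T, hh, x, hx => by
      rcases List.mem_singleton.mp hx with rfl
      exact hh x rfl
  | a :: b :: l, T, hh, x, hx => by
      have ha : a ∈ T.verts := hh a rfl
      have hb : b ∈ (addEdge T a b).verts := mem_addEdge T b ha
      show x ∈ (grow (addEdge T a b) (b :: l)).verts
      rcases List.mem_cons.mp hx with rfl | hx
      · exact grow_subset (b :: l) _ (addEdge_subset T x b ha)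
      · exact grow_mem (b :: l) (addEdge T a b)
          (fun h he => by rw [List.head?_cons, Option.some_inj] at he; exact he ▸ hb) x hx

theorem grow_cost (c : V → V → ℝ) (hnn : ∀ a b, 0 ≤ c a b) :
    ∀ (P : List V) (T : RTree V r), treeCost c (grow T P) ≤ treeCost c T + walkCost c P
  | [], T => by simp [grow, walkCost]
  | [a], T => by simp [grow, walkCost]
  | a :: b :: l, T => by
      have h1 := grow_cost c hnn (b :: l) (addEdge T a b)
      have h2 := addEdge_cost c hnn T a b
      show treeCost c (grow (addEdge T a b) (b :: l)) ≤ _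
      calc treeCost c (grow (addEdge T a b) (b :: l))
          ≤ treeCost c (addEdge T a b) + walkCost c (b :: l) := h1
        _ ≤ (treeCost c T + c a b) + walkCost c (b :: l) := by linarith
        _ = treeCost c T + walkCost c (a :: b :: l) := by
            show _ = treeCost c T + (c a b + walkCost c (b :: l)); ring

/-- Grow a tree along a list of walks. -/
def growAll (T : RTree V r) : List (List V) → RTree V r
  | [] => T
  | P :: rest => growAll (grow T P) rest

theorem growAll_subset : ∀ (𝒞 : List (List V)) (T : RTree V r),
    T.verts ⊆ (growAll T 𝒞).verts
  | [], _ => Finset.Subset.refl _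
  | P :: rest, T => (grow_subset P T).trans (growAll_subset rest (grow T P))

theorem growAll_mem : ∀ (𝒞 : List (List V)) (T : RTree V r),
    (∀ P ∈ 𝒞, P.head? = some r) → unionVerts 𝒞 ⊆ (growAll T 𝒞).verts
  | [], _, _ => by simp [unionVerts]
  | P :: rest, T, hh => by
      intro x hx
      have hx' : x ∈ P.toFinset ∪ unionVerts rest := hx
      rcases Finset.mem_union.mp hx' with hx | hx
      · exact growAll_subset rest (grow T P)
          (grow_mem P T (fun h heq => by
            have := hh P List.mem_cons_self
            rw [this, Option.some_inj] at heq; exact heq ▸ T.root_mem) x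
            (List.mem_toFinset.mp hx))
      · exact growAll_mem rest (grow T P) (fun Q hQ => hh Q (List.mem_cons_of_mem P hQ)) hx

theorem growAll_cost (c : V → V → ℝ) (hnn : ∀ a b, 0 ≤ c a b) :
    ∀ (𝒞 : List (List V)) (T : RTree V r),
      treeCost c (growAll T 𝒞) ≤ treeCost c T + (𝒞.map (walkCost c)).sum
  | [], T => by simp [growAll]
  | P :: rest, T => by
      have h1 := growAll_cost c hnn rest (grow T P)
      have h2 := grow_cost c hnn P T
      show treeCost c (growAll (grow T P) rest) ≤ _
      simp only [List.map_cons, List.sum_cons]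
      linarith

theorem walkCost_nonneg (c : V → V → ℝ) (hnn : ∀ a b, 0 ≤ c a b) :
    ∀ P : List V, 0 ≤ walkCost c P
  | [] => le_refl _
  | [_] => le_refl _
  | a :: b :: l => add_nonneg (hnn a b) (walkCost_nonneg c hnn (b :: l))

theorem treeCost_nonneg (c : V → V → ℝ) (hnn : ∀ a b, 0 ≤ c a b) (T : RTree V r) :
    0 ≤ treeCost c T :=
  Finset.sum_nonneg fun _ _ => hnn _ _

theorem trivTree_cost (c : V → V → ℝ) : treeCost c (trivTree V r) = 0 := by
  unfold treeCost trivTree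
  simp

end Aux

/-- let `O*` be the minimum total cost of a finite collection of `r`-rooted
paths whose union spans at least `B` nodes.  Then there is a rooted tree or bipoint tree
`Q = a·T₁ + b·T₂` with `c(Q) ≤ O*` and `|V(Q)| = B`. -/
theorem bipoint_tree_for_coverage
    {V : Type*} [Fintype V] [DecidableEq V] (r : V)
    (c : V → V → ℝ) (hc : IsMetricCost c)
    (B : ℕ) (hB1 : 1 ≤ B) (hBn : B ≤ Fintype.card V)
    (Ostar : ℝ)
    (hO : IsLeast {y : ℝ | ∃ 𝒞 : List (List V),
        (∀ P ∈ 𝒞, P.head? = some r) ∧ B ≤ (unionVerts 𝒞).card ∧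
        y = (𝒞.map (walkCost c)).sum} Ostar) :
    ∃ (T₁ T₂ : RTree V r) (a b : ℝ), 0 ≤ a ∧ 0 ≤ b ∧ a + b = 1 ∧
      a * treeCost c T₁ + b * treeCost c T₂ ≤ Ostar ∧
      a * (T₁.verts.card : ℝ) + b * (T₂.verts.card : ℝ) = (B : ℝ) := by
  obtain ⟨⟨𝒞, hheads, hcard, hsum⟩, -⟩ := hO
  have hnn := hc.2.1
  set T : RTree V r := growAll (trivTree V r) 𝒞 with hT
  have hTcost : treeCost c T ≤ Ostar := by
    have := growAll_cost c hnn 𝒞 (trivTree V r)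
    rw [trivTree_cost c, zero_add] at this
    rw [hsum]; exact this
  have hTcard : B ≤ T.verts.card :=
    hcard.trans (Finset.card_le_card (growAll_mem 𝒞 (trivTree V r) hheads))
  have hT0 : 0 ≤ treeCost c T := treeCost_nonneg c hnn T
  set k : ℕ := T.verts.card with hk
  rcases eq_or_lt_of_le hTcard with heq | hlt
  · -- B = k : single tree
    refine ⟨T, T, 1, 0, zero_le_one, le_refl 0, by ring, by linarith, ?_⟩
    rw [heq, hk]; ring
  · -- B < k : bipoint with trivial tree
    have hk1 : (1 : ℝ) < (k : ℝ) := by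
      have : 1 ≤ B := hB1
      exact_mod_cast lt_of_le_of_lt hB1 hlt
    have hkne : (k : ℝ) - 1 ≠ 0 := by linarith
    set b : ℝ := ((B : ℝ) - 1) / ((k : ℝ) - 1) with hb
    have hB1' : (1 : ℝ) ≤ (B : ℝ) := by exact_mod_cast hB1
    have hb0 : 0 ≤ b := div_nonneg (by linarith) (by linarith)
    have hb1 : b ≤ 1 := by
      rw [hb, div_le_one (by linarith)]
      have : (B : ℝ) ≤ (k : ℝ) := by exact_mod_cast hTcard
      linarith
    refine ⟨trivTree V r, T, 1 - b, b, by linarith, hb0, by ring, ?_, ?_⟩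
    · rw [trivTree_cost c]
      have : b * treeCost c T ≤ 1 * treeCost c T := by
        apply mul_le_mul_of_nonneg_right hb1 hT0
      linarith
    · show (1 - b) * ((trivTree V r).verts.card : ℝ) + b * (k : ℝ) = (B : ℝ)
      have hcard1 : ((trivTree V r).verts.card : ℝ) = 1 := by
        simp [trivTree]
      rw [hcard1, hb]
      field_simp
      ring
end

section
/- Let (V,c) be a finite metric space with a distinguished root r ∈ V, let d : V → ℝ≥0 be node service times with d_r = 0, and let k ≥ 1 be an integer. Let Q be a tree on a subset of V containing r (a rooted tree), let S ⊆ V(Q), and let L = max_{u∈S} (c(r,u) + d_u) (L = 0 if S is empty). Then there exist k cycles Z_1, …, Z_k — closed walks in the complete graph on V starting and ending at r — whose vertex sets together cover S, such that for every i = 1,…,k: c(Z_i) + 2·d(V(Z_i)) ≤ 2·(c(Q) + d(V(Q)))/k + 2L, where c(Z) is the total edge cost of the walk Z, V(Z) its vertex set, c(Q) the total edge cost of Q, and d(X) := ∑_{v∈X} d_v. -/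
open Finset

section ListLemmas

variable {V : Type*} (c : V → V → ℝ) (d : V → ℝ)

lemma walkCost_nil : walkCost c [] = 0 := rfl
lemma walkCost_single (a : V) : walkCost c [a] = 0 := rfl
lemma walkCost_cons_cons (a b : V) (l : List V) :
    walkCost c (a :: b :: l) = c a b + walkCost c (b :: l) := rfl

lemma walkCost_nonneg_s16 (h : ∀ u v, 0 ≤ c u v) : ∀ l : List V, 0 ≤ walkCost c l
  | [] => le_refl 0
  | [_] => le_refl 0
  | _ :: b :: l => add_nonneg (h _ _) (walkCost_nonneg_s16 h (b :: l))

lemma walkCost_append_cons : ∀ (s : List V) (x a : V) (t : List V),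
    walkCost c (x :: s ++ a :: t) = walkCost c (x :: s ++ [a]) + walkCost c (a :: t)
  | [], x, a, t => by simp [walkCost_cons_cons, walkCost_single]
  | y :: s, x, a, t => by
      have ih := walkCost_append_cons s y a t
      simp only [List.cons_append, walkCost_cons_cons] at ih ⊢
      rw [ih]; ring

lemma walkCost_concat : ∀ (s : List V) (x y : V),
    walkCost c (x :: s ++ [y]) = walkCost c (x :: s) + c ((x :: s).getLast (by simp)) y
  | [], x, y => by simp [walkCost_cons_cons, walkCost_single, walkCost_nil]
  | a :: s, x, y => by
      have ih := walkCost_concat s a y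
      simp only [List.cons_append, walkCost_cons_cons] at ih ⊢
      rw [ih]
      have h2 : (x :: a :: s).getLast (by simp) = (a :: s).getLast (by simp) :=
        List.getLast_cons (by simp)
      rw [h2]; ring

lemma walkCost_cons_le (htri : ∀ u v x, c u x ≤ c u v + c v x) (hnn : ∀ u v, 0 ≤ c u v) :
    ∀ (l : List V) (x a : V), walkCost c (x :: l) ≤ c x a + walkCost c (a :: l)
  | [], x, a => by simpa [walkCost_single] using hnn x a
  | h :: t, x, a => by
      simp only [walkCost_cons_cons]
      have := htri x a h
      linarith

lemma walkCost_sublist_le (htri : ∀ u v x, c u x ≤ c u v + c v x)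
    (hnn : ∀ u v, 0 ≤ c u v) {l₁ l₂ : List V} (h : List.Sublist l₂ l₁) :
    ∀ x, walkCost c (x :: l₂) ≤ walkCost c (x :: l₁) := by
  induction h with
  | slnil => intro x; exact le_refl _
  | cons a h ih =>
      intro x
      exact (ih x).trans (walkCost_cons_le c htri hnn _ x a)
  | cons_cons a h ih =>
      intro x
      simp only [walkCost_cons_cons]
      exact add_le_add_right (ih a) _

/-- weight of a path starting at `x` through `l`, with each `d` counted once per
edge-endpoint (interior vertices twice). -/
def pathWt (c : V → V → ℝ) (d : V → ℝ) : V → List V → ℝ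
  | _, [] => 0
  | x, a :: t => c x a + d x + d a + pathWt c d a t

lemma pathWt_nil (x : V) : pathWt c d x [] = 0 := rfl
lemma pathWt_cons (x a : V) (t : List V) :
    pathWt c d x (a :: t) = c x a + d x + d a + pathWt c d a t := rfl

lemma pathWt_nonneg (hnn : ∀ u v, 0 ≤ c u v) (hd : ∀ v, 0 ≤ d v) :
    ∀ (x : V) (l : List V), 0 ≤ pathWt c d x l
  | _, [] => le_refl 0
  | x, a :: t => by
      have := pathWt_nonneg hnn hd a t
      have h1 := hnn x a; have h2 := hd x; have h3 := hd a
      simp only [pathWt_cons]; linarith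

lemma pathWt_append : ∀ (s : List V) (x : V) (t : List V),
    pathWt c d x (s ++ t) = pathWt c d x s + pathWt c d ((x :: s).getLast (by simp)) t
  | [], x, t => by simp [pathWt_nil]
  | a :: s, x, t => by
      have ih := pathWt_append s a t
      simp only [List.cons_append, pathWt_cons] at ih ⊢
      rw [ih]
      have h2 : (x :: a :: s).getLast (by simp) = (a :: s).getLast (by simp) :=
        List.getLast_cons (by simp)
      rw [h2]; ring

lemma pathWt_eq_walkCost : ∀ (l : List V) (h : l ≠ []) (x : V),
    pathWt c d x l + d (l.getLast h) = walkCost c (x :: l) + 2 * (l.map d).sum + d x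
  | [a], _, x => by
      simp [pathWt_cons, pathWt_nil, walkCost_cons_cons, walkCost_single]; ring
  | a :: b :: t, _, x => by
      have ih := pathWt_eq_walkCost (b :: t) (by simp) a
      rw [List.getLast_cons (by simp : (b :: t) ≠ [])]
      simp only [pathWt_cons, walkCost_cons_cons, List.map_cons, List.sum_cons] at ih ⊢
      linarith

lemma sum_toFinset_le [DecidableEq V] (hd : ∀ v, 0 ≤ d v) :
    ∀ l : List V, ∑ v ∈ l.toFinset, d v ≤ (l.map d).sum
  | [] => by simp
  | a :: l => by
      have ih := sum_toFinset_le hd l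
      simp only [List.toFinset_cons, List.map_cons, List.sum_cons]
      by_cases h : a ∈ l.toFinset
      · rw [Finset.insert_eq_self.2 h]
        have := hd a; linarith
      · rw [Finset.sum_insert h]; linarith

lemma sum_toFinset_eq [DecidableEq V] :
    ∀ l : List V, l.Nodup → ∑ v ∈ l.toFinset, d v = (l.map d).sum
  | [], _ => by simp
  | a :: l, h => by
      have ih := sum_toFinset_eq l h.of_cons
      simp only [List.toFinset_cons, List.map_cons, List.sum_cons]
      rw [Finset.sum_insert (by simpa using h.notMem), ih]

end ListLemmas
section Tree
variable {V : Type*} [DecidableEq V] {r : V}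

/-- normalize a tree so that the parent of the root is the root. -/
def normTree (Q : RTree V r) : RTree V r where
  verts := Q.verts
  root_mem := Q.root_mem
  parent := fun u => if u = r then r else Q.parent u
  parent_mem := by
    intro v hv
    by_cases h : v = r
    · simpa [h] using Q.root_mem
    · simpa [h] using Q.parent_mem v hv
  reaches := by
    have aux : ∀ (m : ℕ) (v : V), Q.parent^[m] v = r →
        ∃ m', (fun u => if u = r then r else Q.parent u)^[m'] v = r := by
      intro m
      induction m with
      | zero => intro v hv; exact ⟨0, hv⟩
      | succ m ih =>
          intro v hv
          by_cases hvr : v = r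
          · exact ⟨0, hvr⟩
          · rw [Function.iterate_succ_apply] at hv
            obtain ⟨m', hm'⟩ := ih (Q.parent v) hv
            refine ⟨m' + 1, ?_⟩
            rw [Function.iterate_succ_apply]
            simpa [hvr] using hm'
    intro v hv
    obtain ⟨m, hm⟩ := Q.reaches v hv
    exact aux m v hm

lemma normTree_parent_root (Q : RTree V r) : (normTree Q).parent r = r := by
  simp [normTree]

lemma normTree_verts (Q : RTree V r) : (normTree Q).verts = Q.verts := rfl

lemma treeCost_normTree (c : V → V → ℝ) (Q : RTree V r) :
    treeCost c (normTree Q) = treeCost c Q := by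
  unfold treeCost
  refine Finset.sum_congr rfl fun v hv => ?_
  have : v ≠ r := (Finset.mem_erase.1 hv).1
  simp [normTree, this]

noncomputable def rdepth (Q : RTree V r) (v : V) : ℕ :=
  if h : v ∈ Q.verts then Nat.find (Q.reaches v h) else 0

lemma rdepth_parent_lt (Q : RTree V r) {u : V} (hu : u ∈ Q.verts) (hur : u ≠ r) :
    rdepth Q (Q.parent u) < rdepth Q u := by
  have hpu := Q.parent_mem u hu
  unfold rdepth
  rw [dif_pos hu, dif_pos hpu]
  have hspec := Nat.find_spec (Q.reaches u hu)
  set m := Nat.find (Q.reaches u hu) with hm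
  have hm0 : m ≠ 0 := by
    intro h0
    rw [h0] at hspec
    exact hur hspec
  have hiter : Q.parent^[m - 1] (Q.parent u) = r := by
    have : (m - 1).succ = m := Nat.succ_pred_eq_of_pos (Nat.pos_of_ne_zero hm0)
    rw [← Function.iterate_succ_apply, this]
    exact hspec
  have : Nat.find (Q.reaches (Q.parent u) hpu) ≤ m - 1 := Nat.find_le hiter
  omega

omit [DecidableEq V] in
lemma parent_ne_self (Q : RTree V r) {v : V} (hv : v ∈ Q.verts) (hvr : v ≠ r) :
    Q.parent v ≠ v := by
  intro h
  obtain ⟨m, hm⟩ := Q.reaches v hv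
  rw [Function.iterate_fixed h] at hm
  exact hvr hm

end Tree

section Euler
variable {V : Type*} [DecidableEq V] {r : V}

lemma euler_tour (c : V → V → ℝ) (hc : IsMetricCost c) :
    ∀ (n : ℕ) (Q : RTree V r), Q.verts.card ≤ n → Q.parent r = r →
      ∃ l : List V, l.head? = some r ∧ l.getLast? = some r ∧
        (∀ v ∈ Q.verts, v ∈ l) ∧ walkCost c l ≤ 2 * treeCost c Q := by
  obtain ⟨hc0, hcnn, hcsymm, hctri⟩ := hc
  intro n
  induction n with
  | zero =>
      intro Q hcard _
      have : 0 < Q.verts.card := Finset.card_pos.2 ⟨r, Q.root_mem⟩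
      omega
  | succ n ih =>
      intro Q hcard hpr
      by_cases hsing : Q.verts = {r}
      · refine ⟨[r], rfl, rfl, ?_, ?_⟩
        · intro v hv; rw [hsing, Finset.mem_singleton] at hv; simp [hv]
        · have : treeCost c Q = 0 := by
            unfold treeCost; rw [hsing]; simp
          rw [this, walkCost_single]
          norm_num
      -- pick a deepest non-root vertex v (a leaf)
      · have hcard1 : 1 < Q.verts.card := by
          rcases Nat.lt_or_ge 1 Q.verts.card with h | h
          · exact h
          · exfalso; apply hsing
            have h1 : Q.verts.card = 1 := le_antisymm h (Finset.card_pos.2 ⟨r, Q.root_mem⟩)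
            rcases Finset.card_eq_one.1 h1 with ⟨a, ha⟩
            have hra := Q.root_mem
            rw [ha, Finset.mem_singleton] at hra
            rw [ha, hra]
        have hne : (Q.verts.erase r).Nonempty := by
          obtain ⟨v, hv, hvr⟩ := Finset.exists_mem_ne hcard1 r
          exact ⟨v, Finset.mem_erase.2 ⟨hvr, hv⟩⟩
        obtain ⟨v, hvT, hvmax⟩ := Finset.exists_max_image (Q.verts.erase r) (rdepth Q) hne
        have hvr : v ≠ r := (Finset.mem_erase.1 hvT).1
        have hvmem : v ∈ Q.verts := (Finset.mem_erase.1 hvT).2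
        -- leaf property
        have hleaf : ∀ u ∈ Q.verts, u ≠ v → Q.parent u ≠ v := by
          intro u hu huv hpar
          by_cases hur : u = r
          · rw [hur, hpr] at hpar; exact hvr hpar.symm
          · have h1 := rdepth_parent_lt Q hu hur
            rw [hpar] at h1
            have h2 := hvmax u (Finset.mem_erase.2 ⟨hur, hu⟩)
            omega
        have hpv : Q.parent v ≠ v := parent_ne_self Q hvmem hvr
        have hpvmem : Q.parent v ∈ Q.verts := Q.parent_mem v hvmem
        -- the smaller tree
        set Q' : RTree V r :=
          { verts := Q.verts.erase v
            root_mem := Finset.mem_erase.2 ⟨Ne.symm hvr, Q.root_mem⟩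
            parent := Q.parent
            parent_mem := by
              intro u hu
              rcases Finset.mem_erase.1 hu with ⟨huv, hum⟩
              exact Finset.mem_erase.2 ⟨hleaf u hum huv, Q.parent_mem u hum⟩
            reaches := fun u hu => Q.reaches u (Finset.mem_erase.1 hu).2 } with hQ'
        have hcard' : Q'.verts.card ≤ n := by
          have : Q'.verts.card = Q.verts.card - 1 := Finset.card_erase_of_mem hvmem
          omega
        obtain ⟨l', hl'h, hl'l, hl'cov, hl'cost⟩ := ih Q' hcard' hpr
        -- cost splitting
        have hTC : treeCost c Q = c (Q.parent v) v + treeCost c Q' := by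
          unfold treeCost
          have hvmem' : v ∈ Q.verts.erase r := Finset.mem_erase.2 ⟨hvr, hvmem⟩
          rw [← Finset.add_sum_erase _ _ hvmem']
          congr 1
          rw [Finset.erase_right_comm]
        -- splice v next to its parent
        have hpl' : Q.parent v ∈ l' :=
          hl'cov _ (Finset.mem_erase.2 ⟨hpv, hpvmem⟩)
        obtain ⟨A, B, hAB⟩ := List.append_of_mem hpl'
        set p := Q.parent v with hp
        refine ⟨A ++ p :: v :: p :: B, ?_, ?_, ?_, ?_⟩
        · rw [hAB] at hl'h
          cases A with
          | nil => simpa using hl'h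
          | cons x A' => simpa using hl'h
        · rw [hAB, List.getLast?_append_cons] at hl'l
          rw [show A ++ p :: v :: p :: B = (A ++ [p, v]) ++ p :: B by simp,
            List.getLast?_append_cons]
          exact hl'l
        · intro u hu
          by_cases huv : u = v
          · subst huv; simp
          · have := hl'cov u (Finset.mem_erase.2 ⟨huv, hu⟩)
            rw [hAB] at this
            simp only [List.mem_append, List.mem_cons] at this ⊢
            tauto
        · have hsplice : walkCost c (A ++ p :: v :: p :: B)
              = walkCost c (A ++ p :: B) + 2 * c p v := by
            cases A with
            | nil =>
                simp only [List.nil_append, walkCost_cons_cons]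
                rw [hcsymm v p]; ring
            | cons x A' =>
                rw [walkCost_append_cons c A' x p (v :: p :: B),
                  walkCost_append_cons c A' x p B,
                  walkCost_cons_cons, walkCost_cons_cons]
                rw [hcsymm v p]; ring
          rw [hsplice, ← hAB, hTC]
          linarith

end Euler

section Cuts

lemma dc_eq_range {F : Finset ℕ} (h : ∀ a b : ℕ, a ≤ b → b ∈ F → a ∈ F) :
    F = Finset.range F.card := by
  ext a
  simp only [Finset.mem_range]
  constructor
  · intro ha
    have hsub : Finset.range (a + 1) ⊆ F := by
      intro x hx
      exact h x a (Nat.lt_succ_iff.1 (Finset.mem_range.1 hx)) ha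
    have hcard := Finset.card_le_card hsub
    rw [Finset.card_range] at hcard
    omega
  · intro ha
    by_contra hna
    have hsub : F ⊆ Finset.range a := by
      intro x hx
      rw [Finset.mem_range]
      by_contra hxa
      push_neg at hxa
      exact hna (h a x hxa hx)
    have hcard := Finset.card_le_card hsub
    rw [Finset.card_range] at hcard
    omega

lemma exists_cut_idx (cut : ℕ → ℕ) : ∀ (k j : ℕ), cut 0 ≤ j → j < cut k →
    ∃ i, i < k ∧ cut i ≤ j ∧ j < cut (i + 1) := by
  intro k
  induction k with
  | zero => intro j h1 h2; omega
  | succ k ih =>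
      intro j h1 h2
      by_cases h : cut k ≤ j
      · exact ⟨k, Nat.lt_succ_self k, h, h2⟩
      · obtain ⟨i, hi, h3, h4⟩ := ih j h1 (by omega)
        exact ⟨i, by omega, h3, h4⟩

end Cuts


/-- tree-breaking lemma: given a rooted tree `Q`, `S ⊆ V(Q)` and
`L = max_{u∈S} (c(r,u) + d_u)` (with `L = 0` for empty `S`; note all these values are
nonnegative, so `L` is the greatest element of `{0} ∪ {c(r,u) + d_u : u ∈ S}`), there are
`k` cycles `Z_1,…,Z_k` through `r` covering `S` with
`c(Z_i) + 2·d(V(Z_i)) ≤ 2·(c(Q) + d(V(Q)))/k + 2L` for every `i`. -/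
theorem tree_to_k_cycles
    {V : Type*} [Fintype V] [DecidableEq V]
    (c : V → V → ℝ) (hc : IsMetricCost c) (r : V)
    (d : V → ℝ) (hd : ∀ v, 0 ≤ d v) (hdr : d r = 0)
    (k : ℕ) (hk : 1 ≤ k)
    (Q : RTree V r) (S : Finset V) (hS : S ⊆ Q.verts)
    (L : ℝ) (hL : IsGreatest (insert (0 : ℝ) ((fun u => c r u + d u) '' ↑S)) L) :
    ∃ Z : Fin k → List V,
      (∀ i, (Z i).head? = some r ∧ (Z i).getLast? = some r) ∧
      (∀ v ∈ S, ∃ i, v ∈ Z i) ∧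
      ∀ i, walkCost c (Z i) + 2 * ∑ v ∈ (Z i).toFinset, d v ≤
        2 * (treeCost c Q + ∑ v ∈ Q.verts, d v) / (k : ℝ) + 2 * L := by
  classical
  obtain ⟨hc0, hcnn, hcsymm, hctri⟩ := id hc
  have hLnn : 0 ≤ L := hL.2 (Set.mem_insert _ _)
  have hLS : ∀ u ∈ S, c r u + d u ≤ L := fun u hu =>
    hL.2 (Set.mem_insert_of_mem _ ⟨u, by simpa using hu, rfl⟩)
  -- Euler tour of the normalized tree
  obtain ⟨l, hlh, hll, hlcov, hlcost⟩ :=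
    euler_tour (r := r) c hc Q.verts.card (normTree Q)
      (le_of_eq (by rw [normTree_verts])) (normTree_parent_root Q)
  rw [treeCost_normTree] at hlcost
  have hlcov' : ∀ v ∈ Q.verts, v ∈ l := by
    intro v hv; exact hlcov v (by rwa [normTree_verts])
  -- the shortcut tour through S
  set w : List V := (l.filter (fun x => x ∈ S)).dedup with hwdef
  have hw_sub : List.Sublist w l := (List.dedup_sublist _).trans List.filter_sublist
  have hw_mem : ∀ x ∈ w, x ∈ S := by
    intro x hx
    rw [hwdef, List.mem_dedup, List.mem_filter] at hx
    simpa using hx.2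
  have hw_cov : ∀ x ∈ S, x ∈ w := by
    intro x hx
    rw [hwdef, List.mem_dedup, List.mem_filter]
    exact ⟨hlcov' x (hS hx), by simpa⟩
  have hw_nodup : w.Nodup := List.nodup_dedup _
  have hwS : w.toFinset = S := by
    ext x
    rw [List.mem_toFinset]
    exact ⟨hw_mem x, hw_cov x⟩
  set D : ℝ := 2 * (treeCost c Q + ∑ v ∈ Q.verts, d v) with hD
  have htc_nn : 0 ≤ treeCost c Q := Finset.sum_nonneg fun v _ => hcnn _ _
  have hdsum_nn : 0 ≤ ∑ v ∈ Q.verts, d v := Finset.sum_nonneg fun v _ => hd v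
  have hDnn : 0 ≤ D := by rw [hD]; linarith
  have hkpos : (0 : ℝ) < (k : ℝ) := by exact_mod_cast hk
  set G : ℕ → ℝ := fun j => pathWt c d r (w.take j) with hG
  have hGnn : ∀ j, 0 ≤ G j := fun j => pathWt_nonneg c d hcnn hd _ _
  have hGstep : ∀ j, G j ≤ G (j + 1) := by
    intro j
    rcases Nat.lt_or_ge j w.length with hj | hj
    · simp only [hG]
      rw [List.take_succ, List.getElem?_eq_getElem hj,
        show (some w[j]).toList = [w[j]] from rfl, pathWt_append]
      have := pathWt_nonneg c d hcnn hd ((r :: w.take j).getLast (by simp)) [w[j]]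
      linarith
    · simp only [hG]
      rw [List.take_succ, List.getElem?_eq_none hj]
      simp
  have hGmono : Monotone G := monotone_nat_of_le_succ hGstep
  -- bound on the total weight
  have hGm : G w.length ≤ D := by
    simp only [hG, List.take_length]
    rcases eq_or_ne w [] with hwnil | hwne
    · rw [hwnil, pathWt_nil]; exact hDnn
    · obtain ⟨t, rfl⟩ : ∃ t, l = r :: t := by
        cases l with
        | nil => simp at hlh
        | cons a t =>
            have ha : a = r := by simpa using hlh
            exact ⟨t, by rw [ha]⟩
      have hident := pathWt_eq_walkCost c d w hwne r
      have h1 : walkCost c ((r :: w) ++ [r])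
          = walkCost c (r :: w) + c ((r :: w).getLast (by simp)) r := walkCost_concat c w r r
      have h2 : walkCost c (r :: (w ++ [r])) ≤ walkCost c (r :: ((r :: t) ++ [r])) :=
        walkCost_sublist_le c hctri hcnn (List.Sublist.append_right hw_sub [r]) r
      rw [show (r :: ((r :: t) ++ [r])) = r :: r :: (t ++ [r]) by simp] at h2
      rw [walkCost_cons_cons, hc0] at h2
      have h3 : walkCost c ((r :: t) ++ [r])
          = walkCost c (r :: t) + c ((r :: t).getLast (by simp)) r := walkCost_concat c t r r
      have hlast : (r :: t).getLast (by simp) = r := by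
        have := List.getLast?_eq_getLast (l := r :: t) (by simp)
        rw [this] at hll
        injection hll with h
      rw [show r :: (t ++ [r]) = (r :: t) ++ [r] by simp, h3, hlast, hc0] at h2
      have h4 : (w.map d).sum = ∑ v ∈ S, d v := by
        rw [← hwS, sum_toFinset_eq d w hw_nodup]
      have h5 : ∑ v ∈ S, d v ≤ ∑ v ∈ Q.verts, d v :=
        Finset.sum_le_sum_of_subset_of_nonneg hS fun v _ _ => hd v
      have h6 : 0 ≤ c ((r :: w).getLast (by simp)) r := hcnn _ _
      have h7 : 0 ≤ d (w.getLast hwne) := hd _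
      have h8 : walkCost c ((r :: w) ++ [r]) = walkCost c (r :: (w ++ [r])) := by
        rw [List.cons_append]
      rw [hD]
      -- pathWt r w = walkCost (r::w) + 2*sum + d r - d last
      have := hident
      linarith [hlcost]
  -- the cut points
  set cut : ℕ → ℕ := fun i => if i = 0 then 0 else
    ((Finset.range w.length).filter (fun j => (k : ℝ) * G (j + 1) ≤ (i : ℝ) * D)).card
    with hcutdef
  have hcut0 : cut 0 = 0 := by simp [hcutdef]
  have hfilter : ∀ i : ℕ,
      ((Finset.range w.length).filter (fun j => (k : ℝ) * G (j + 1) ≤ (i : ℝ) * D))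
        = Finset.range (((Finset.range w.length).filter
            (fun j => (k : ℝ) * G (j + 1) ≤ (i : ℝ) * D)).card) := by
    intro i
    apply dc_eq_range
    intro a b hab hb
    rw [Finset.mem_filter] at hb ⊢
    refine ⟨Finset.mem_range.2 (by have := Finset.mem_range.1 hb.1; omega), ?_⟩
    calc (k : ℝ) * G (a + 1) ≤ (k : ℝ) * G (b + 1) :=
          mul_le_mul_of_nonneg_left (hGmono (by omega)) (by positivity)
      _ ≤ (i : ℝ) * D := hb.2
  have hcut_mono : ∀ i i' : ℕ, i ≤ i' → cut i ≤ cut i' := by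
    intro i i' hii
    rcases Nat.eq_zero_or_pos i with rfl | hi
    · rw [hcut0]; omega
    · have hi' : i' ≠ 0 := by omega
      simp only [hcutdef, if_neg (by omega : i ≠ 0), if_neg hi']
      apply Finset.card_le_card
      intro x hx
      rw [Finset.mem_filter] at hx ⊢
      refine ⟨hx.1, le_trans hx.2 ?_⟩
      apply mul_le_mul_of_nonneg_right _ hDnn
      exact_mod_cast hii
  have hcut_le : ∀ i, cut i ≤ w.length := by
    intro i
    rcases Nat.eq_zero_or_pos i with rfl | hi
    · rw [hcut0]; omega
    · simp only [hcutdef, if_neg (by omega : i ≠ 0)]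
      calc ((Finset.range w.length).filter _).card
          ≤ (Finset.range w.length).card := Finset.card_le_card (Finset.filter_subset _ _)
        _ = w.length := Finset.card_range _
  have hcut_k : cut k = w.length := by
    simp only [hcutdef, if_neg (by omega : k ≠ 0)]
    rw [Finset.filter_true_of_mem, Finset.card_range]
    intro j hj
    have hj' : j + 1 ≤ w.length := by
      have := Finset.mem_range.1 hj; omega
    calc (k : ℝ) * G (j + 1) ≤ (k : ℝ) * G w.length :=
          mul_le_mul_of_nonneg_left (hGmono hj') (by positivity)
      _ ≤ (k : ℝ) * D := mul_le_mul_of_nonneg_left hGm (by positivity)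
  have hcutA : ∀ i : ℕ, i ≠ 0 → 1 ≤ cut i → (k : ℝ) * G (cut i) ≤ (i : ℝ) * D := by
    intro i hi hpos
    have heq : cut i = ((Finset.range w.length).filter
        (fun j => (k : ℝ) * G (j + 1) ≤ (i : ℝ) * D)).card := by
      simp only [hcutdef, if_neg hi]
    have hmem : cut i - 1 ∈ ((Finset.range w.length).filter
        (fun j => (k : ℝ) * G (j + 1) ≤ (i : ℝ) * D)) := by
      rw [hfilter i, Finset.mem_range, ← heq]
      omega
    have hP : (k : ℝ) * G (cut i - 1 + 1) ≤ (i : ℝ) * D := (Finset.mem_filter.1 hmem).2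
    rwa [show cut i - 1 + 1 = cut i by omega] at hP
  have hcutB : ∀ i : ℕ, i ≠ 0 → cut i < w.length → (i : ℝ) * D < (k : ℝ) * G (cut i + 1) := by
    intro i hi hlt
    by_contra hcon
    push_neg at hcon
    have hmem : cut i ∈ (Finset.range w.length).filter
        (fun j => (k : ℝ) * G (j + 1) ≤ (i : ℝ) * D) :=
      Finset.mem_filter.2 ⟨Finset.mem_range.2 hlt, hcon⟩
    have heq : cut i = ((Finset.range w.length).filter
        (fun j => (k : ℝ) * G (j + 1) ≤ (i : ℝ) * D)).card := by
      simp only [hcutdef, if_neg hi]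
    rw [hfilter i, Finset.mem_range, ← heq] at hmem
    omega
  -- the cycles
  refine ⟨fun i => (r :: ((w.take (cut (i.1 + 1))).drop (cut i.1))) ++ [r], ?_, ?_, ?_⟩
  · intro i
    constructor
    · simp
    · exact List.getLast?_concat
  · -- coverage
    intro u hu
    have huw : u ∈ w := hw_cov u hu
    obtain ⟨j, hjlen, hjget⟩ := List.getElem_of_mem huw
    obtain ⟨i, hik, h1, h2⟩ := exists_cut_idx cut k j (by rw [hcut0]; omega)
      (by rw [hcut_k]; exact hjlen)
    obtain ⟨t, rfl⟩ : ∃ t, j = cut i + t := ⟨j - cut i, by omega⟩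
    refine ⟨⟨i, hik⟩, ?_⟩
    have hmem : u ∈ (w.take (cut (i + 1))).drop (cut i) := by
      refine List.mem_iff_getElem.2 ⟨t, ?_, ?_⟩
      · rw [List.length_drop, List.length_take]
        omega
      · rw [List.getElem_drop, List.getElem_take]
        exact hjget
    simp only [List.mem_append, List.mem_cons]
    tauto
  · -- the cost bound
    intro i
    have hik1 : i.1 + 1 ≠ 0 := by omega
    set a := cut i.1 with ha
    set b := cut (i.1 + 1) with hb
    have hab : a ≤ b := hcut_mono _ _ (by omega)
    have hbm : b ≤ w.length := hcut_le _
    set seg : List V := (w.take b).drop a with hseg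
    show walkCost c ((r :: seg) ++ [r]) + 2 * ∑ v ∈ ((r :: seg) ++ [r]).toFinset, d v ≤
      D / (k : ℝ) + 2 * L
    have hsum_le : ∑ v ∈ ((r :: seg) ++ [r]).toFinset, d v ≤ (seg.map d).sum := by
      calc ∑ v ∈ ((r :: seg) ++ [r]).toFinset, d v
          ≤ (((r :: seg) ++ [r]).map d).sum := sum_toFinset_le d hd _
        _ = (seg.map d).sum := by simp [hdr]
    rcases eq_or_ne seg [] with hsegnil | hsegne
    · rw [hsegnil]
      have hwc : walkCost c ((r :: ([] : List V)) ++ [r]) = 0 := by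
        rw [show (r :: ([] : List V)) ++ [r] = [r, r] from rfl, walkCost_cons_cons,
          walkCost_single, hc0]
        ring
      rw [hwc]
      have hsum : ∑ v ∈ ((r :: ([] : List V)) ++ [r]).toFinset, d v = 0 := by
        simp [hdr]
      rw [hsum]
      have hdiv : 0 ≤ D / (k : ℝ) := div_nonneg hDnn (le_of_lt hkpos)
      linarith [hdiv]
    · -- nonempty segment
      have hlen : seg.length = b - a := by
        rw [hseg, List.length_drop, List.length_take]; omega
      have haltb : a < b := by
        by_contra hcon
        push_neg at hcon
        apply hsegne
        rw [← List.length_eq_zero_iff]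
        omega
      have ham : a < w.length := lt_of_lt_of_le haltb hbm
      set first := seg.head hsegne with hfirst
      set lastv := seg.getLast hsegne with hlastv
      have hfS : first ∈ S := by
        have h1 : first ∈ seg := List.head_mem hsegne
        rw [hseg] at h1
        exact hw_mem _ (List.mem_of_mem_take (List.mem_of_mem_drop h1))
      have hlS : lastv ∈ S := by
        have h1 : lastv ∈ seg := List.getLast_mem hsegne
        rw [hseg] at h1
        exact hw_mem _ (List.mem_of_mem_take (List.mem_of_mem_drop h1))
      have hsegcons : first :: seg.tail = seg := List.cons_head_tail hsegne
      have hlentake : (w.take a).length = a := by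
        rw [List.length_take]; omega
      have htake_eq : w.take b = w.take a ++ seg := by
        conv_lhs => rw [← List.take_append_drop a (w.take b)]
        rw [List.take_take, min_eq_left hab, ← hseg]
      have htake1 : w.take (a + 1) = w.take a ++ [first] := by
        have h1 : w.take (a + 1) = (w.take b).take (a + 1) := by
          rw [List.take_take, min_eq_left (by omega : a + 1 ≤ b)]
        rw [h1, htake_eq, ← hsegcons, List.take_append, hlentake,
          show a + 1 - a = 1 by omega, List.take_take,
          min_eq_right (by omega : a ≤ a + 1)]
        simp
      have hGb0 := pathWt_append c d (w.take a) r seg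
      have hGa10 := pathWt_append c d (w.take a) r [first]
      have hGb : G b = pathWt c d r (w.take a ++ seg) := by
        simp only [hG]; rw [htake_eq]
      rw [hGb0] at hGb
      conv at hGb => rw [← hsegcons]
      rw [pathWt_cons] at hGb
      have hGa1 : G (a + 1) = pathWt c d r (w.take a ++ [first]) := by
        simp only [hG]; rw [htake1]
      rw [hGa10, pathWt_cons, pathWt_nil] at hGa1
      have hrseg : pathWt c d r seg = c r first + d r + d first + pathWt c d first seg.tail := by
        conv_lhs => rw [← hsegcons]
        rw [pathWt_cons]
      -- walk cost identities
      have e1 : walkCost c ((r :: seg) ++ [r])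
          = walkCost c (r :: seg) + c ((r :: seg).getLast (by simp)) r :=
        walkCost_concat c seg r r
      rw [List.getLast_cons hsegne, ← hlastv] at e1
      have e2 := pathWt_eq_walkCost c d seg hsegne r
      rw [← hlastv] at e2
      -- bounds from L
      have hfb : c r first + d first ≤ L := hLS first hfS
      have hlb : c r lastv + d lastv ≤ L := hLS lastv hlS
      have hsym : c lastv r = c r lastv := hcsymm _ _
      -- threshold bounds
      have hA : (k : ℝ) * G b ≤ ((i.1 + 1 : ℕ) : ℝ) * D := by
        have h1 : 1 ≤ cut (i.1 + 1) := by rw [← hb]; omega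
        have := hcutA (i.1 + 1) hik1 h1
        rwa [← hb] at this
      have hB : ((i.1 : ℕ) : ℝ) * D ≤ (k : ℝ) * G (a + 1) := by
        rcases Nat.eq_zero_or_pos i.1 with h0 | h1
        · rw [h0]
          push_cast
          rw [zero_mul]
          exact mul_nonneg (by positivity) (hGnn _)
        · have h2 : cut i.1 < w.length := by rw [← ha]; omega
          have := hcutB i.1 (by omega) h2
          rw [← ha] at this
          exact le_of_lt this
      have hdivk : G b - G (a + 1) ≤ D / (k : ℝ) := by
        rw [le_div_iff₀ hkpos]
        have hexp : (G b - G (a + 1)) * (k : ℝ) = (k : ℝ) * G b - (k : ℝ) * G (a + 1) := by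
          ring
        rw [hexp]
        push_cast at hA hB
        linarith
      rw [e1]
      linarith [hsum_le, e2, hrseg, hGb, hGa1, hdivk, hfb, hlb]
end
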